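/- If in a DAG every vertex in the conditioning set S is an ancestor of A ∪ B, then d-separation of A and B by S in the full DAG holds if and only if it holds in the ancestral subgraph generated by A ∪ B ∪ S. -/

import Mathlib

/-- Skeleton (undirected) adjacency of a directed graph. -/
def Skel {V : Type*} (E : V → V → Prop) (a b : V) : Prop := E a b ∨ E b a

/-- Directed reachability: `Reaches E a b` iff there is a directed path from `a` to `b`. -/
def Reaches {V : Type*} (E : V → V → Prop) : V → V → Prop := Relation.ReflTransGen E

/-- A directed graph is acyclic if no edge can be completed to a directed cycle. -/
def IsAcyclicD {V : Type*} (E : V → V → Prop) : Prop := ∀ a b : V, E a b → ¬ Reaches E b a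

/-- `(a, b, c)` is an immorality (v-structure): `a → b ← c` with `a, c` non-adjacent. -/
def Immorality {V : Type*} (E : V → V → Prop) (a b c : V) : Prop :=
  a ≠ c ∧ E a b ∧ E c b ∧ ¬ Skel E a c

/-- `p` is an (undirected) trail from `a` to `b` in the skeleton of `E`. -/
def IsTrail {V : Type*} (E : V → V → Prop) (a b : V) (p : List V) : Prop :=
  p.Chain' (Skel E) ∧ p.head? = some a ∧ p.getLast? = some b ∧ p.Nodup ∧ 2 ≤ p.length

/-- A consecutive triple `x - y - z` on a trail is blocked by `S`:
a collider `x → y ← z` blocks unless `y` has a descendant (possibly itself) in `S`;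
a non-collider blocks iff `y ∈ S`. -/
def BlockedTriple {V : Type*} (E : V → V → Prop) (S : Set V) (x y z : V) : Prop :=
  ((E x y ∧ E z y) ∧ ∀ d ∈ S, ¬ Reaches E y d) ∨ (¬ (E x y ∧ E z y) ∧ y ∈ S)

/-- A trail is blocked by `S` if some consecutive triple on it is blocked. -/
def BlockedTrail {V : Type*} (E : V → V → Prop) (S : Set V) (p : List V) : Prop :=
  ∃ l x y z r, p = l ++ x :: y :: z :: r ∧ BlockedTriple E S x y z

/-- d-separation: every trail between `A` and `B` is blocked by `S`. -/
def DSep {V : Type*} (E : V → V → Prop) (A B S : Set V) : Prop :=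
  ∀ a ∈ A, ∀ b ∈ B, ∀ p : List V, IsTrail E a b p → BlockedTrail E S p

/-- Markov equivalence: the same d-separations among disjoint sets. -/
def MarkovEquiv {V : Type*} (E₁ E₂ : V → V → Prop) : Prop :=
  ∀ A B S : Set V, Disjoint A B → Disjoint A S → Disjoint B S →
    (DSep E₁ A B S ↔ DSep E₂ A B S)

/-- The ancestral closure of `W`: all vertices with a directed path into `W`. -/
def AncSet {V : Type*} (E : V → V → Prop) (W : Set V) : Set V :=
  {v | ∃ w ∈ W, Reaches E v w}

/-- The subgraph induced on a vertex set. -/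
def InducedE {V : Type*} (E : V → V → Prop) (W : Set V) (a b : V) : Prop :=
  E a b ∧ a ∈ W ∧ b ∈ W

/-- Moral graph adjacency: skeleton edges plus marriages of common parents. -/
def Moral {V : Type*} (E : V → V → Prop) (a b : V) : Prop :=
  a ≠ b ∧ (E a b ∨ E b a ∨ ∃ c, E a c ∧ E b c)

/-- `p` is a path from `a` to `b` in the undirected graph `G`. -/
def UPath {V : Type*} (G : V → V → Prop) (a b : V) (p : List V) : Prop :=
  p.Chain' G ∧ p.head? = some a ∧ p.getLast? = some b ∧ p.Nodup

/-- Separation in an undirected graph: every path from `A` to `B` meets `S`. -/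
def USep {V : Type*} (G : V → V → Prop) (A B S : Set V) : Prop :=
  ∀ a ∈ A, ∀ b ∈ B, ∀ p : List V, UPath G a b p → ∃ s ∈ S, s ∈ p

section Aux
variable {V : Type*}

lemma skel_symm {E : V → V → Prop} : ∀ a b, Skel E a b → Skel E b a := fun _ _ h => h.symm

lemma aux_right (E : V → V → Prop) (S W : Set V)
    (hWc : ∀ u v, E u v → v ∈ W → u ∈ W)
    (hS : ∀ y, (∃ d ∈ S, Reaches E y d) → y ∈ W) :
    ∀ (n : ℕ) (q : List V), q.length ≤ n → q.Chain' (Skel E) →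
      (∀ x y z, (∃ l r, q = l ++ x :: y :: z :: r) → E x y → E z y → ∃ d ∈ S, Reaches E y d) →
      (∀ w, q.getLast? = some w → w ∈ W) →
      ∀ u u' r, q = u :: u' :: r → E u u' → u ∈ W := by
  intro n
  induction n with
  | zero => intro q hlen _ _ _ u u' r heq _; subst heq; simp at hlen
  | succ n ih =>
    intro q hlen hch hcol hlast u u' r heq hEuu'
    subst heq
    have hu' : u' ∈ W := by
      cases r with
      | nil => exact hlast u' (by simp)
      | cons u'' r' =>
        rw [List.Chain', List.isChain_cons_cons, List.isChain_cons_cons] at hch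
        rcases hch.2.1 with h | h
        · exact ih (u' :: u'' :: r') (by simpa using Nat.le_of_succ_le_succ hlen)
            (List.isChain_cons_cons.2 hch.2)
            (fun x y z ⟨l, r0, hq⟩ hxy hzy => hcol x y z ⟨u :: l, r0, by rw [hq]; rfl⟩ hxy hzy)
            (fun w hw => hlast w (by rw [List.getLast?_cons_cons]; exact hw))
            u' u'' r' rfl h
        · exact hS u' (hcol u u' u'' ⟨[], r', rfl⟩ hEuu' h)
    exact hWc u u' hEuu' hu'

lemma mem_W_of_active (E : V → V → Prop) (S W : Set V)
    (hWc : ∀ u v, E u v → v ∈ W → u ∈ W)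
    (hS : ∀ y, (∃ d ∈ S, Reaches E y d) → y ∈ W)
    (p : List V) (hch : p.Chain' (Skel E))
    (hcol : ∀ x y z, (∃ l r, p = l ++ x :: y :: z :: r) → E x y → E z y → ∃ d ∈ S, Reaches E y d)
    (hhead : ∀ u, p.head? = some u → u ∈ W)
    (hlast : ∀ u, p.getLast? = some u → u ∈ W) :
    ∀ v ∈ p, v ∈ W := by
  intro v hv
  obtain ⟨l, r, rfl⟩ := List.append_of_mem hv
  cases r with
  | nil => exact hlast v (List.getLast?_concat (l := l))
  | cons u r' =>
    have hch2 : (v :: u :: r').Chain' (Skel E) := (List.isChain_append.1 hch).2.1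
    rcases List.isChain_cons_cons.1 hch2 |>.1 with hvu | huv
    · -- walk right
      exact aux_right E S W hWc hS (v :: u :: r').length (v :: u :: r') le_rfl hch2
        (fun x y z ⟨l0, r0, hq⟩ hxy hzy => hcol x y z ⟨l ++ l0, r0, by rw [hq]; simp⟩ hxy hzy)
        (fun w hw => hlast w (by rw [List.getLast?_append, hw]; rfl)) v u r' rfl hvu
    · -- edge points into v from the right; look left
      rcases List.eq_nil_or_concat l with rfl | ⟨l'', w, rfl⟩
      · exact hhead v rfl
      · have hp : l''.concat w ++ v :: u :: r' = l'' ++ (w :: v :: u :: r') := by simp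
        have hch3 : (w :: v :: u :: r').Chain' (Skel E) := by
          rw [hp] at hch; exact (List.isChain_append.1 hch).2.1
        rcases List.isChain_cons_cons.1 hch3 |>.1 with hwv | hvw
        · -- collider at v
          exact hS v (hcol w v u ⟨l'', r', by rw [hp]⟩ hwv huv)
        · -- walk left, on the reversed prefix
          have hpre : (l'' ++ [w, v]).Chain' (Skel E) := by
            have : l''.concat w ++ v :: u :: r' = (l'' ++ [w, v]) ++ u :: r' := by simp
            rw [this] at hch
            exact (List.isChain_append.1 hch).1
          have hrevch : ((l'' ++ [w, v]).reverse).Chain' (Skel E) := by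
            rw [List.Chain', List.isChain_reverse]
            exact hpre.imp (fun a b h => skel_symm a b h)
          have hrev : (l'' ++ [w, v]).reverse = v :: w :: l''.reverse := by simp
          refine aux_right E S W hWc hS _ (v :: w :: l''.reverse) le_rfl (hrev ▸ hrevch)
            ?_ ?_ v w l''.reverse rfl hvw
          · rintro x y z ⟨l0, r0, hq⟩ hxy hzy
            have : l'' ++ [w, v] = r0.reverse ++ z :: y :: x :: l0.reverse := by
              have := congrArg List.reverse (hrev ▸ hq :
                (l'' ++ [w, v]).reverse = l0 ++ x :: y :: z :: r0)
              simpa using this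
            refine hcol z y x ⟨r0.reverse, l0.reverse ++ u :: r', ?_⟩ hzy hxy
            calc l''.concat w ++ v :: u :: r' = (l'' ++ [w, v]) ++ u :: r' := by simp
              _ = (r0.reverse ++ z :: y :: x :: l0.reverse) ++ u :: r' := by rw [this]
              _ = r0.reverse ++ z :: y :: x :: (l0.reverse ++ u :: r') := by simp
          · intro w' hw'
            have hh : (l'' ++ [w, v]).head? = some w' := by
              rw [← List.getLast?_reverse, hrev]; exact hw'
            refine hhead w' ?_
            rw [show l''.concat w ++ v :: u :: r' = (l'' ++ [w, v]) ++ u :: r' by simp,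
              List.head?_append, hh]
            rfl

end Aux

/-- If every vertex of `S` is an ancestor of `A ∪ B`, then d-separation of `A` and `B`
by `S` in the full DAG holds iff it holds in the ancestral subgraph generated by
`A ∪ B ∪ S`. -/



theorem dsep_iff_dsep_ancestral
    {V : Type*} [Fintype V] [DecidableEq V]
    (E : V → V → Prop) (hE : IsAcyclicD E) (A B S : Set V)
    (hAB : Disjoint A B) (hAS : Disjoint A S) (hBS : Disjoint B S)
    (hanc : ∀ s ∈ S, s ∈ AncSet E (A ∪ B)) :
    DSep E A B S ↔ DSep (InducedE E (AncSet E (A ∪ B ∪ S))) A B S := by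
  set W := AncSet E (A ∪ B ∪ S) with hW
  have hWc : ∀ u v, E u v → v ∈ W → u ∈ W := by
    rintro u v huv ⟨w0, hw0, hr⟩
    exact ⟨w0, hw0, Relation.ReflTransGen.head huv hr⟩
  have hS : ∀ y, (∃ d ∈ S, Reaches E y d) → y ∈ W := by
    rintro y ⟨d, hd, hr⟩
    exact ⟨d, Or.inr hd, hr⟩
  have hAW : A ⊆ W := fun a ha => ⟨a, Or.inl (Or.inl ha), Relation.ReflTransGen.refl⟩
  have hBW : B ⊆ W := fun b hb => ⟨b, Or.inl (Or.inr hb), Relation.ReflTransGen.refl⟩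
  have hlift : ∀ y d, d ∈ S → Reaches E y d → Reaches (InducedE E W) y d := by
    intro y d hd hr
    induction hr using Relation.ReflTransGen.head_induction_on with
    | refl => exact Relation.ReflTransGen.refl
    | head h' h ih =>
      exact Relation.ReflTransGen.head
        ⟨h', hWc _ _ h' ⟨d, Or.inr hd, h⟩, ⟨d, Or.inr hd, h⟩⟩ ih
  constructor
  · -- full ⇒ induced
    intro hD a ha b hb p hp
    obtain ⟨hch, hhd, hlt, hnd, hlen⟩ := hp
    have hchE : p.Chain' (Skel E) := hch.imp (fun a b h => h.imp And.left And.left)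
    obtain ⟨l, x, y, z, r, hdec, hbt⟩ := hD a ha b hb p ⟨hchE, hhd, hlt, hnd, hlen⟩
    refine ⟨l, x, y, z, r, hdec, ?_⟩
    have hch2 : (x :: y :: z :: r).Chain' (Skel (InducedE E W)) := by
      rw [hdec] at hch; exact (List.isChain_append.1 hch).2.1
    have hsxy : Skel (InducedE E W) x y := (List.isChain_cons_cons.1 hch2).1
    have hsyz : Skel (InducedE E W) y z := (List.isChain_cons_cons.1 (List.isChain_cons_cons.1 hch2).2).1
    rcases hbt with ⟨⟨hxy, hzy⟩, hnod⟩ | ⟨hnc, hyS⟩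
    · refine Or.inl ⟨⟨?_, ?_⟩, ?_⟩
      · rcases hsxy with h | h
        · exact h
        · exact absurd (Relation.ReflTransGen.single h.1) (hE x y hxy)
      · rcases hsyz with h | h
        · exact absurd (Relation.ReflTransGen.single h.1) (hE z y hzy)
        · exact h
      · intro d hd hr
        exact hnod d hd (Relation.ReflTransGen.mono (fun a b (h : InducedE E W a b) => h.1) y d hr)
    · exact Or.inr ⟨fun h => hnc ⟨h.1.1, h.2.1⟩, hyS⟩
  · -- induced ⇒ full
    intro hD a ha b hb p hp
    by_contra hblk
    obtain ⟨hch, hhd, hlt, hnd, hlen⟩ := hp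
    have hnb : ∀ l x y z r, p = l ++ x :: y :: z :: r → ¬ BlockedTriple E S x y z := by
      intro l x y z r hdec hbt
      exact hblk ⟨l, x, y, z, r, hdec, hbt⟩
    have hcol : ∀ x y z, (∃ l r, p = l ++ x :: y :: z :: r) → E x y → E z y →
        ∃ d ∈ S, Reaches E y d := by
      rintro x y z ⟨l, r, hdec⟩ hxy hzy
      by_contra hno
      push_neg at hno
      exact hnb l x y z r hdec (Or.inl ⟨⟨hxy, hzy⟩, hno⟩)
    have hmem : ∀ v ∈ p, v ∈ W :=
      mem_W_of_active E S W hWc hS p hch hcol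
        (fun u hu => by rw [hhd] at hu; exact (Option.some.inj hu) ▸ hAW ha)
        (fun u hu => by rw [hlt] at hu; exact (Option.some.inj hu) ▸ hBW hb)
    have hchI : p.Chain' (Skel (InducedE E W)) := by
      rw [List.Chain', List.isChain_iff_getElem] at hch ⊢
      intro i h
      have h1 := hch i h
      have m1 : p.get ⟨i, by omega⟩ ∈ p := p.get_mem _
      have m2 : p.get ⟨i + 1, by omega⟩ ∈ p := p.get_mem _
      rcases h1 with h | h
      · exact Or.inl ⟨h, hmem _ m1, hmem _ m2⟩
      · exact Or.inr ⟨h, hmem _ m2, hmem _ m1⟩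
    obtain ⟨l, x, y, z, r, hdec, hbt⟩ := hD a ha b hb p ⟨hchI, hhd, hlt, hnd, hlen⟩
    rcases hbt with ⟨⟨hxy, hzy⟩, hnod⟩ | ⟨hnc, hyS⟩
    · obtain ⟨d, hd, hr⟩ := hcol x y z ⟨l, r, hdec⟩ hxy.1 hzy.1
      exact hnod d hd (hlift y d hd hr)
    · have h1 : ¬ BlockedTriple E S x y z := hnb l x y z r hdec
      have hcolE : E x y ∧ E z y := by
        by_contra hne
        exact h1 (Or.inr ⟨hne, hyS⟩)
      have hxp : x ∈ p := by rw [hdec]; simp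
      have hyp : y ∈ p := by rw [hdec]; simp
      have hzp : z ∈ p := by rw [hdec]; simp
      exact hnc ⟨⟨hcolE.1, hmem x hxp, hmem y hyp⟩, ⟨hcolE.2, hmem z hzp, hmem y hyp⟩⟩
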